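/- Let U be a bounded operator on l²(ℕ) and fix n ∈ ℕ. Then ‖P_n U* P_m U P_n − P_n U* U P_n‖ ≤ Σ_{j=m+1}^∞ ⟨U P_n U* e_j, e_j⟩, and this bound tends to 0 as m → ∞; in particular P_n U* P_m U P_n converges in operator norm to P_n U* U P_n as m → ∞. -/

import Mathlib

noncomputable section
open MeasureTheory ContinuousLinearMap Filter Topology
open scoped InnerProductSpace
open scoped ComplexConjugate ENNReal

/-- The sequence space `ℓ²(ℕ)`. -/
abbrev H2 : Type := lp (fun _ : ℕ => ℂ) 2

/-- The span of the first `n` canonical basis vectors `e_0, …, e_{n-1}` of `ℓ²(ℕ)`. -/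
def Ksub (n : ℕ) : Submodule ℂ H2 :=
  Submodule.span ℂ ((fun i => lp.single 2 i (1:ℂ)) '' (Set.Iio n))

instance (n : ℕ) : FiniteDimensional ℂ (Ksub n) :=
  FiniteDimensional.span_of_finite ℂ ((Set.finite_Iio n).image _)

/-- The coordinate projection `P_n` onto the span of the first `n` basis vectors. -/
def Pn (n : ℕ) : H2 →L[ℂ] H2 :=
  (Ksub n).subtypeL.comp ((Ksub n).orthogonalProjectionOnto)

/-- The compression of an operator `T` to the range of `P_n`, as an operator on `Ksub n`. -/
def compK (n : ℕ) (T : H2 →L[ℂ] H2) : Ksub n →L[ℂ] Ksub n :=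
  ((Ksub n).orthogonalProjectionOnto).comp (T.comp (Ksub n).subtypeL)

/-- The compression of `U* P_m U` to the range of `P_n`, i.e. `P_n U* P_m U P_n` viewed
as an operator on `Ksub n`. -/
def compKm (n m : ℕ) (U : H2 →L[ℂ] H2) : Ksub n →L[ℂ] Ksub n :=
  compK n ((ContinuousLinearMap.adjoint U).comp ((Pn m).comp U))

/-- The uneven finite section `P_n U* P_m U P_n` as an operator on all of `ℓ²(ℕ)`. -/
def Sec (n m : ℕ) (U : H2 →L[ℂ] H2) : H2 →L[ℂ] H2 :=
  (Pn n).comp ((ContinuousLinearMap.adjoint U).comp ((Pn m).comp (U.comp (Pn n))))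

/-- The section `P_n U* U P_n` as an operator on all of `ℓ²(ℕ)`. -/
def SecInf (n : ℕ) (U : H2 →L[ℂ] H2) : H2 →L[ℂ] H2 :=
  (Pn n).comp ((ContinuousLinearMap.adjoint U).comp (U.comp (Pn n)))

/-- `P_n U* P_m U P_n^⊥` as an operator on `ℓ²(ℕ)`. -/
def SecPerp (n m : ℕ) (U : H2 →L[ℂ] H2) : H2 →L[ℂ] H2 :=
  (Pn n).comp ((ContinuousLinearMap.adjoint U).comp ((Pn m).comp
    (U.comp (ContinuousLinearMap.id ℂ H2 - Pn n))))

/-- The operator `(P_n U* P_m U P_n|_{P_n ℓ²})⁻¹ P_n U* P_m U P_n^⊥`, where `Ainv` is the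
inverse of the finite section on `Ksub n`. -/
def Kop (n m : ℕ) (U : H2 →L[ℂ] H2) (Ainv : Ksub n →L[ℂ] Ksub n) : H2 →L[ℂ] H2 :=
  (Ksub n).subtypeL.comp (Ainv.comp (((Ksub n).orthogonalProjectionOnto).comp
    ((ContinuousLinearMap.adjoint U).comp ((Pn m).comp
      (U.comp (ContinuousLinearMap.id ℂ H2 - Pn n))))))

lemma Pn_coord (n : ℕ) (x : H2) (j : ℕ) :
    (Pn n x) j = if j < n then x j else 0 := by
  classical
  set y : H2 := ∑ i ∈ Finset.range n, lp.single 2 i (x i) with hy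
  have hyc : ∀ k : ℕ, y k = if k < n then x k else 0 := by
    intro k
    have h0 : y k = ∑ i ∈ Finset.range n, (lp.single 2 i (x i) : H2) k := by
      rw [hy, lp.coeFn_sum, Finset.sum_apply]
    rw [h0]
    by_cases h : k < n
    · rw [Finset.sum_eq_single k]
      · rw [lp.single_apply_self, if_pos h]
      · intro i _ hik
        exact lp.single_apply_ne 2 i _ (Ne.symm hik)
      · intro hk; exact absurd (Finset.mem_range.mpr h) hk
    · rw [if_neg h, Finset.sum_eq_zero]
      intro i hi
      exact lp.single_apply_ne 2 i _
        (fun hk => h (by rw [hk]; exact Finset.mem_range.mp hi))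
  have hmem : y ∈ Ksub n := by
    refine Submodule.sum_mem _ (fun i hi => ?_)
    have h1 : (lp.single 2 i (x i) : H2) = ((x i) • lp.single 2 i (1:ℂ) : H2) := by
      have h2 := lp.single_smul (E := fun _ : ℕ => ℂ) (𝕜 := ℂ) 2 i (x i) (1:ℂ)
      simpa using h2
    rw [h1]
    exact Submodule.smul_mem _ _ (Submodule.subset_span
      (Set.mem_image_of_mem _ (show i ∈ Set.Iio n from Finset.mem_range.mp hi)))
  have horth : ∀ w ∈ Ksub n, ⟪x - y, w⟫_ℂ = 0 := by
    intro w hw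
    induction hw using Submodule.span_induction with
    | mem w hw =>
      obtain ⟨i, hi, rfl⟩ := hw
      rw [lp.inner_single_right]
      have h2 : (x - y : H2) i = x i - y i := by rw [lp.coeFn_sub, Pi.sub_apply]
      have h3 : (x - y : H2) i = 0 := by
        rw [h2, hyc i, if_pos (Set.mem_Iio.mp hi), sub_self]
      rw [h3]; simp
    | zero => simp
    | add a b _ _ ha hb => rw [inner_add_right, ha, hb, add_zero]
    | smul c a _ ha => rw [inner_smul_right, ha, mul_zero]
  have h := Submodule.eq_starProjection_of_mem_of_inner_eq_zero (K := Ksub n) hmem horth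
  have hPn : Pn n x = y := h
  rw [show (Pn n x) j = y j from by rw [hPn], hyc j]

lemma Pn_idem (n : ℕ) (x : H2) : Pn n (Pn n x) = Pn n x := by
  refine lp.ext (funext fun j => ?_)
  show (Pn n (Pn n x)) j = (Pn n x) j
  rw [Pn_coord, Pn_coord]
  by_cases h : j < n <;> simp [h, Pn_coord]

lemma Pn_sa (n : ℕ) : ContinuousLinearMap.adjoint (Pn n) = Pn n := by
  rw [← ContinuousLinearMap.star_eq_adjoint]
  exact isSelfAdjoint_starProjection (Ksub n)

lemma inner_Pn_left (n : ℕ) (a b : H2) : ⟪Pn n a, b⟫_ℂ = ⟪a, Pn n b⟫_ℂ := by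
  nth_rewrite 1 [← Pn_sa n]
  exact ContinuousLinearMap.adjoint_inner_left (Pn n) b a

lemma coord_eq_inner (f : H2) (j : ℕ) : ⟪(lp.single 2 j (1:ℂ) : H2), f⟫_ℂ = f j := by
  rw [lp.inner_single_left]
  simp [RCLike.inner_apply]

def tr (U : H2 →L[ℂ] H2) (n : ℕ) (j : ℕ) : ℝ :=
  ‖Pn n (ContinuousLinearMap.adjoint U (lp.single 2 j 1))‖ ^ 2

lemma diag_eq (U : H2 →L[ℂ] H2) (n j : ℕ) :
    (⟪(U.comp ((Pn n).comp (ContinuousLinearMap.adjoint U))) (lp.single 2 j 1),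
      lp.single 2 j 1⟫_ℂ).re = tr U n j := by
  set e : H2 := lp.single 2 j (1:ℂ) with he
  set ξ : H2 := ContinuousLinearMap.adjoint U e with hξ
  have h1 : (U.comp ((Pn n).comp (ContinuousLinearMap.adjoint U))) e = U (Pn n ξ) := rfl
  have h2 : ⟪U (Pn n ξ), e⟫_ℂ = ⟪Pn n ξ, ξ⟫_ℂ := by
    rw [← ContinuousLinearMap.adjoint_inner_right U (Pn n ξ) e]
  have h3 : ⟪Pn n ξ, ξ⟫_ℂ = ⟪Pn n ξ, Pn n ξ⟫_ℂ := by
    nth_rewrite 1 [← Pn_idem n ξ]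
    rw [inner_Pn_left]
  rw [h1, h2, h3]
  exact inner_self_eq_norm_sq (𝕜 := ℂ) (Pn n ξ)

lemma adj_coord (U : H2 →L[ℂ] H2) (j i : ℕ) :
    (ContinuousLinearMap.adjoint U (lp.single 2 j 1)) i
      = conj ((U (lp.single 2 i (1:ℂ))) j) := by
  rw [← coord_eq_inner, ContinuousLinearMap.adjoint_inner_right, lp.inner_single_right]
  simp [RCLike.inner_apply]

lemma rpow_two_eq (r : ℝ) : r ^ ((2:ℝ≥0∞).toReal) = r ^ (2:ℕ) := by
  rw [show ((2:ℝ≥0∞).toReal) = ((2:ℕ):ℝ) by norm_num, Real.rpow_natCast]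

lemma norm_sq_eq_tsum (a : H2) : ‖a‖ ^ (2:ℕ) = ∑' i, ‖a i‖ ^ (2:ℕ) := by
  have h := lp.norm_rpow_eq_tsum (p := 2) (by norm_num) a
  rw [rpow_two_eq] at h
  rw [h]
  exact tsum_congr fun i => rpow_two_eq _

lemma coord_summable (a : H2) : Summable (fun i => ‖a i‖ ^ (2:ℕ)) := by
  have h := (lp.memℓp a).summable (p := 2) (by norm_num)
  simpa [rpow_two_eq] using h

lemma tr_eq_sum (U : H2 →L[ℂ] H2) (n j : ℕ) :
    tr U n j = ∑ i ∈ Finset.range n, ‖(U (lp.single 2 i (1:ℂ))) j‖ ^ (2:ℕ) := by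
  rw [tr, norm_sq_eq_tsum]
  rw [tsum_eq_sum (s := Finset.range n) ?h]
  · refine Finset.sum_congr rfl fun i hi => ?_
    rw [Pn_coord, if_pos (Finset.mem_range.mp hi), adj_coord]
    simp
  · intro i hi
    rw [Pn_coord, if_neg (fun h => hi (Finset.mem_range.mpr h))]
    simp

lemma tr_nonneg (U : H2 →L[ℂ] H2) (n j : ℕ) : 0 ≤ tr U n j := by
  rw [tr]; positivity

lemma tr_summable (U : H2 →L[ℂ] H2) (n : ℕ) : Summable (tr U n) := by
  have h : Summable (fun j => ∑ i ∈ Finset.range n, ‖(U (lp.single 2 i (1:ℂ))) j‖ ^ (2:ℕ)) := by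
    exact summable_sum fun i _ => coord_summable (U (lp.single 2 i (1:ℂ)))
  refine h.congr fun j => (tr_eq_sum U n j).symm

lemma tail_summable (U : H2 →L[ℂ] H2) (n m : ℕ) :
    Summable (fun j => if m ≤ j then tr U n j else 0) := by
  refine Summable.of_nonneg_of_le (fun j => ?_) (fun j => ?_) (tr_summable U n)
  · by_cases h : m ≤ j <;> simp [h, tr_nonneg]
  · by_cases h : m ≤ j <;> simp [h, tr_nonneg]

lemma inner_bound (U : H2 →L[ℂ] H2) (n m : ℕ) (x y : H2) :
    ‖⟪(Sec n m U - SecInf n U) x, y⟫_ℂ‖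
      ≤ (∑' j, if m ≤ j then tr U n j else 0) * (‖x‖ * ‖y‖) := by
  set u : H2 := U (Pn n x) with hu
  set v : H2 := U (Pn n y) with hv
  have key : ⟪(Sec n m U - SecInf n U) x, y⟫_ℂ = ⟪Pn m u - u, v⟫_ℂ := by
    have h1 : (Sec n m U - SecInf n U) x
        = Pn n (ContinuousLinearMap.adjoint U (Pn m u))
          - Pn n (ContinuousLinearMap.adjoint U u) := rfl
    rw [h1, inner_sub_left, inner_sub_left, inner_Pn_left, inner_Pn_left,
      ContinuousLinearMap.adjoint_inner_left, ContinuousLinearMap.adjoint_inner_left]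
  have hcoord : ∀ j, (Pn m u - u : H2) j = if m ≤ j then -(u j) else 0 := by
    intro j
    have h2 : (Pn m u - u : H2) j = (Pn m u) j - u j := by rw [lp.coeFn_sub, Pi.sub_apply]
    rw [h2, Pn_coord]
    by_cases h : j < m
    · simp [h, Nat.not_le.mpr h]
    · simp [h, Nat.le_of_not_lt h]
  have hterm : ∀ j, ⟪(Pn m u - u : H2) j, v j⟫_ℂ
      = if m ≤ j then -(conj (u j) * v j) else 0 := by
    intro j
    rw [RCLike.inner_apply, hcoord j]
    by_cases h : m ≤ j <;> simp [h, mul_comm]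
  -- pointwise bounds
  have hu' : ∀ j : ℕ, ‖u j‖ ≤ ‖Pn n (ContinuousLinearMap.adjoint U (lp.single 2 j 1))‖ * ‖x‖ := by
    intro j
    have h3 : u j = ⟪Pn n (ContinuousLinearMap.adjoint U (lp.single 2 j 1)), x⟫_ℂ := by
      rw [← coord_eq_inner u j, hu, ← ContinuousLinearMap.adjoint_inner_left,
        ← inner_Pn_left]
    rw [h3]; exact norm_inner_le_norm _ _
  have hv' : ∀ j : ℕ, ‖v j‖ ≤ ‖Pn n (ContinuousLinearMap.adjoint U (lp.single 2 j 1))‖ * ‖y‖ := by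
    intro j
    have h3 : v j = ⟪Pn n (ContinuousLinearMap.adjoint U (lp.single 2 j 1)), y⟫_ℂ := by
      rw [← coord_eq_inner v j, hv, ← ContinuousLinearMap.adjoint_inner_left,
        ← inner_Pn_left]
    rw [h3]; exact norm_inner_le_norm _ _
  have hb : ∀ j, ‖(if m ≤ j then -(conj (u j) * v j) else 0 : ℂ)‖
      ≤ (if m ≤ j then tr U n j else 0) * (‖x‖ * ‖y‖) := by
    intro j
    by_cases h : m ≤ j
    · rw [if_pos h, if_pos h, norm_neg, norm_mul, RCLike.norm_conj]
      calc ‖u j‖ * ‖v j‖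
          ≤ (‖Pn n (ContinuousLinearMap.adjoint U (lp.single 2 j 1))‖ * ‖x‖)
            * (‖Pn n (ContinuousLinearMap.adjoint U (lp.single 2 j 1))‖ * ‖y‖) :=
            mul_le_mul (hu' j) (hv' j) (norm_nonneg _) (by positivity)
        _ = tr U n j * (‖x‖ * ‖y‖) := by rw [tr]; ring
    · simp [h]
  have hsumg : Summable (fun j => (if m ≤ j then tr U n j else 0) * (‖x‖ * ‖y‖)) :=
    (tail_summable U n m).mul_right _
  have hsumnorm : Summable (fun j => ‖⟪(Pn m u - u : H2) j, v j⟫_ℂ‖) := by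
    refine Summable.of_nonneg_of_le (fun j => norm_nonneg _) (fun j => ?_) hsumg
    rw [hterm j]; exact hb j
  calc ‖⟪(Sec n m U - SecInf n U) x, y⟫_ℂ‖
      = ‖∑' j, ⟪(Pn m u - u : H2) j, v j⟫_ℂ‖ := by rw [key, lp.inner_eq_tsum]
    _ ≤ ∑' j, ‖⟪(Pn m u - u : H2) j, v j⟫_ℂ‖ := norm_tsum_le_tsum_norm hsumnorm
    _ ≤ ∑' j, (if m ≤ j then tr U n j else 0) * (‖x‖ * ‖y‖) := by
        refine Summable.tsum_le_tsum (fun j => ?_) hsumnorm hsumg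
        rw [hterm j]; exact hb j
    _ = (∑' j, if m ≤ j then tr U n j else 0) * (‖x‖ * ‖y‖) := tsum_mul_right

lemma norm_bound (U : H2 →L[ℂ] H2) (n m : ℕ) :
    ‖Sec n m U - SecInf n U‖ ≤ ∑' j, if m ≤ j then tr U n j else 0 := by
  set C := ∑' j, if m ≤ j then tr U n j else 0 with hC
  have hC0 : 0 ≤ C := tsum_nonneg (fun j => by by_cases h : m ≤ j <;> simp [h, tr_nonneg])
  refine ContinuousLinearMap.opNorm_le_bound _ hC0 (fun x => ?_)
  set T := Sec n m U - SecInf n U with hT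
  rcases eq_or_lt_of_le (norm_nonneg (T x)) with h | h
  · rw [← h]; positivity
  · have h1 : ‖T x‖ ^ 2 = (⟪T x, T x⟫_ℂ).re := (inner_self_eq_norm_sq (𝕜 := ℂ) (T x)).symm
    have h2 : (⟪T x, T x⟫_ℂ).re ≤ ‖⟪T x, T x⟫_ℂ‖ :=
      (le_abs_self _).trans (RCLike.abs_re_le_norm (K := ℂ) (⟪T x, T x⟫_ℂ))
    have h3 := inner_bound U n m x (T x)
    have h4 : ‖T x‖ * ‖T x‖ ≤ (C * ‖x‖) * ‖T x‖ := by
      have : ‖T x‖ * ‖T x‖ = ‖T x‖ ^ 2 := (sq (‖T x‖)).symm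
      rw [this, h1]
      calc (⟪T x, T x⟫_ℂ).re ≤ ‖⟪T x, T x⟫_ℂ‖ := h2
        _ ≤ C * (‖x‖ * ‖T x‖) := h3
        _ = (C * ‖x‖) * ‖T x‖ := by ring
    exact le_of_mul_le_mul_right h4 h

lemma tail_eq (U : H2 →L[ℂ] H2) (n m : ℕ) :
    (∑' j, if m ≤ j then tr U n j else 0)
      = (∑' j, tr U n j) - ∑ j ∈ Finset.range m, tr U n j := by
  have htail := tail_summable U n m
  have hhead : Summable (fun j => if j < m then tr U n j else 0) := by
    refine Summable.of_nonneg_of_le (fun j => ?_) (fun j => ?_) (tr_summable U n)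
    · by_cases h : j < m <;> simp [h, tr_nonneg]
    · by_cases h : j < m <;> simp [h, tr_nonneg]
  have hsplit : (∑' j, tr U n j)
      = (∑' j, if j < m then tr U n j else 0) + ∑' j, (if m ≤ j then tr U n j else 0) := by
    rw [← Summable.tsum_add hhead htail]
    refine tsum_congr fun j => ?_
    by_cases h : j < m
    · simp [h, Nat.not_le.mpr h]
    · simp [h, Nat.le_of_not_lt h]
  have hheadsum : (∑' j, if j < m then tr U n j else 0) = ∑ j ∈ Finset.range m, tr U n j := by
    rw [tsum_eq_sum (s := Finset.range m)
      (fun j hj => if_neg (fun h => hj (Finset.mem_range.mpr h)))]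
    exact Finset.sum_congr rfl fun j hj => if_pos (Finset.mem_range.mp hj)
  rw [hsplit, hheadsum]; ring

lemma tail_tendsto (U : H2 →L[ℂ] H2) (n : ℕ) :
    Tendsto (fun m : ℕ => ∑' j, if m ≤ j then tr U n j else 0) atTop (𝓝 0) := by
  have hten : Tendsto (fun m : ℕ => ∑ j ∈ Finset.range m, tr U n j) atTop
      (𝓝 (∑' j, tr U n j)) := (tr_summable U n).hasSum.tendsto_sum_nat
  have h := (tendsto_const_nhds (x := ∑' j, tr U n j) (f := atTop (α := ℕ))).sub hten
  rw [sub_self] at h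
  refine Tendsto.congr (fun m => (tail_eq U n m).symm) h


/-- For fixed `n`, `‖P_n U* P_m U P_n − P_n U* U P_n‖` is bounded by the
tail `Σ_{j ≥ m} ⟨U P_n U* e_j, e_j⟩` of the trace of the trace-class operator `U P_n U*`;
this tail tends to `0`, so `P_n U* P_m U P_n → P_n U* U P_n` in operator norm. -/
theorem section_tail_bound_and_convergence (U : H2 →L[ℂ] H2) (n : ℕ) :
    (∀ m : ℕ, ‖Sec n m U - SecInf n U‖ ≤
      ∑' j : ℕ, if m ≤ j then
        (⟪(U.comp ((Pn n).comp (ContinuousLinearMap.adjoint U))) (lp.single 2 j 1),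
          lp.single 2 j 1⟫_ℂ).re else 0) ∧
    Tendsto (fun m : ℕ => ∑' j : ℕ, if m ≤ j then
        (⟪(U.comp ((Pn n).comp (ContinuousLinearMap.adjoint U))) (lp.single 2 j 1),
          lp.single 2 j 1⟫_ℂ).re else 0) atTop (𝓝 0) ∧
    Tendsto (fun m : ℕ => Sec n m U) atTop (𝓝 (SecInf n U)) := by
  have hdiag : ∀ m : ℕ, (∑' j : ℕ, if m ≤ j then
      (⟪(U.comp ((Pn n).comp (ContinuousLinearMap.adjoint U))) (lp.single 2 j 1),
        lp.single 2 j 1⟫_ℂ).re else 0) = ∑' j, if m ≤ j then tr U n j else 0 := by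
    intro m
    refine tsum_congr fun j => ?_
    by_cases h : m ≤ j
    · rw [if_pos h, if_pos h, diag_eq]
    · rw [if_neg h, if_neg h]
  refine ⟨fun m => ?_, ?_, ?_⟩
  · rw [hdiag m]; exact norm_bound U n m
  · simp only [hdiag]; exact tail_tendsto U n
  · rw [tendsto_iff_norm_sub_tendsto_zero]
    exact squeeze_zero (fun m => norm_nonneg _) (fun m => norm_bound U n m)
      (tail_tendsto U n)
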